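/- Let δ, p, q, α be real numbers with 0<δ<1, 2≤p<q and q<α+1, let X>0, Y≥0, A>0 be reals, define σ:(0,∞)→ℝ by σ(t)=X·t^{p−1−α}+Y·t^{q−1−α}−A·t^{−α−δ}, and let t_max>0 be the unique critical point of σ. Then σ(t_max) ≥ ((α+1−p)/(α+δ))^{(α+δ)/(p−1+δ)} · ((p−1+δ)/(α+1−p)) · X^{(α+δ)/(p−1+δ)} · A^{−(α+1−p)/(p−1+δ)} > 0. -/

import Mathlib

open Filter Set

/-- the value of the fibering function
`σ(t) = X·t^{p−1−α} + Y·t^{q−1−α} − A·t^{−α−δ}` at its unique critical point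
`t_max` (the unique `t > 0` with
`(α+1−p)·X·t^{p−1+δ} + (α+1−q)·Y·t^{q−1+δ} = (α+δ)·A`) satisfies
`σ(t_max) ≥ ((α+1−p)/(α+δ))^{(α+δ)/(p−1+δ)}·((p−1+δ)/(α+1−p))·
X^{(α+δ)/(p−1+δ)}·A^{−(α+1−p)/(p−1+δ)} > 0`. -/
theorem statement4
    (δ p q α X Y A : ℝ)
    (hδ0 : 0 < δ) (hδ1 : δ < 1)
    (hp : 2 ≤ p) (hpq : p < q) (hq : q < α + 1)
    (hX : 0 < X) (hY : 0 ≤ Y) (hA : 0 < A)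
    (σ : ℝ → ℝ)
    (hσ : ∀ t : ℝ, σ t = X * t ^ (p - 1 - α) + Y * t ^ (q - 1 - α)
        - A * t ^ (-α - δ))
    (tmax : ℝ) (htmax : 0 < tmax)
    (heq : (α + 1 - p) * X * tmax ^ (p - 1 + δ)
        + (α + 1 - q) * Y * tmax ^ (q - 1 + δ) = (α + δ) * A) :
    ((α + 1 - p) / (α + δ)) ^ ((α + δ) / (p - 1 + δ))
        * ((p - 1 + δ) / (α + 1 - p))
        * X ^ ((α + δ) / (p - 1 + δ))
        * A ^ (-(α + 1 - p) / (p - 1 + δ)) ≤ σ tmax ∧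
    0 < ((α + 1 - p) / (α + δ)) ^ ((α + δ) / (p - 1 + δ))
        * ((p - 1 + δ) / (α + 1 - p))
        * X ^ ((α + δ) / (p - 1 + δ))
        * A ^ (-(α + 1 - p) / (p - 1 + δ)) := by
  have hc : 0 < α + 1 - p := by linarith
  have hc2 : 0 < α + 1 - q := by linarith
  have hs : 0 < p - 1 + δ := by linarith
  have hd : 0 < α + δ := by linarith
  set β : ℝ := (α + 1 - p) / (p - 1 + δ) with hβdef
  have hβ : 0 < β := div_pos hc hs
  set T := tmax
  have hU : (0:ℝ) < T ^ (p - 1 + δ) := Real.rpow_pos_of_pos htmax _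
  have hV : (0:ℝ) < T ^ (q - 1 + δ) := Real.rpow_pos_of_pos htmax _
  have hP : (0:ℝ) < T ^ (p - 1 - α) := Real.rpow_pos_of_pos htmax _
  have hQ : (0:ℝ) < T ^ (q - 1 - α) := Real.rpow_pos_of_pos htmax _
  have e1 : T ^ (p - 1 + δ) * T ^ (-α - δ) = T ^ (p - 1 - α) := by
    rw [← Real.rpow_add htmax]; ring_nf
  have e2 : T ^ (q - 1 + δ) * T ^ (-α - δ) = T ^ (q - 1 - α) := by
    rw [← Real.rpow_add htmax]; ring_nf
  have key : (α + δ) * σ T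
      = (p - 1 + δ) * (X * T ^ (p - 1 - α)) + (q - 1 + δ) * (Y * T ^ (q - 1 - α)) := by
    rw [hσ]
    linear_combination (T ^ (-α - δ)) * heq - (α + 1 - p) * X * e1 - (α + 1 - q) * Y * e2
  -- lower bound for σ T
  have hlow : (p - 1 + δ) / (α + δ) * X * T ^ (p - 1 - α) ≤ σ T := by
    rw [div_mul_eq_mul_div, div_mul_eq_mul_div, div_le_iff₀ hd]
    nlinarith [mul_nonneg hY hQ.le, mul_pos hs hd]
  -- bound on T ^ (p - 1 - α)
  set B : ℝ := (α + δ) * A / ((α + 1 - p) * X) with hBdef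
  have hB : 0 < B := div_pos (mul_pos hd hA) (mul_pos hc hX)
  have hUB : T ^ (p - 1 + δ) ≤ B := by
    rw [hBdef, le_div_iff₀ (mul_pos hc hX)]
    nlinarith [mul_nonneg (mul_nonneg hc2.le hY) hV.le]
  have hTrw : T ^ (p - 1 - α) = (T ^ (p - 1 + δ)) ^ (-β) := by
    rw [← Real.rpow_mul htmax.le]
    congr 1
    rw [hβdef]
    field_simp
    ring
  have hPB : B ^ (-β) ≤ T ^ (p - 1 - α) := by
    rw [hTrw]
    exact Real.rpow_le_rpow_of_nonpos hU hUB (neg_nonpos.mpr hβ.le)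
  -- algebraic identity for the RHS constant
  have hθ : (α + δ) / (p - 1 + δ) = β + 1 := by
    rw [hβdef]; field_simp; ring
  have hexp : -(α + 1 - p) / (p - 1 + δ) = -β := by
    rw [hβdef]; ring
  have hidB : B ^ (-β) = (α + 1 - p) ^ β * X ^ β / ((α + δ) ^ β * A ^ β) := by
    rw [Real.rpow_neg hB.le, hBdef, Real.div_rpow (mul_pos hd hA).le (mul_pos hc hX).le,
      Real.mul_rpow hd.le hA.le, Real.mul_rpow hc.le hX.le]
    rw [inv_div]
  have hcβ : (0:ℝ) < (α + 1 - p) ^ β := Real.rpow_pos_of_pos hc _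
  have hdβ : (0:ℝ) < (α + δ) ^ β := Real.rpow_pos_of_pos hd _
  have hXβ : (0:ℝ) < X ^ β := Real.rpow_pos_of_pos hX _
  have hAβ : (0:ℝ) < A ^ β := Real.rpow_pos_of_pos hA _
  have hconst : ((α + 1 - p) / (α + δ)) ^ ((α + δ) / (p - 1 + δ))
        * ((p - 1 + δ) / (α + 1 - p))
        * X ^ ((α + δ) / (p - 1 + δ))
        * A ^ (-(α + 1 - p) / (p - 1 + δ))
      = (p - 1 + δ) / (α + δ) * X * B ^ (-β) := by
    rw [hθ, hexp, hidB, Real.rpow_add_one (ne_of_gt (div_pos hc hd)),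
      Real.rpow_add_one hX.ne', Real.rpow_neg hA.le,
      Real.div_rpow hc.le hd.le]
    field_simp
  have hmain : ((α + 1 - p) / (α + δ)) ^ ((α + δ) / (p - 1 + δ))
        * ((p - 1 + δ) / (α + 1 - p))
        * X ^ ((α + δ) / (p - 1 + δ))
        * A ^ (-(α + 1 - p) / (p - 1 + δ)) ≤ σ T := by
    rw [hconst]
    calc (p - 1 + δ) / (α + δ) * X * B ^ (-β)
        ≤ (p - 1 + δ) / (α + δ) * X * T ^ (p - 1 - α) := by
          apply mul_le_mul_of_nonneg_left hPB
          positivity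
      _ ≤ σ T := hlow
  refine ⟨hmain, ?_⟩
  rw [hconst]
  positivity
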